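/- Let Ω ⊆ ℝ² be open, v ∈ C^∞(Ω), β > −1, ε > 0, and ψ ∈ C_c^∞(Ω). Then ∫_Ω −det D[(|Dv|² + ε)^{β/2} Dv] ψ dx = −(1/2) ∫_Ω (|Dv|² + ε)^{β} (D²ψ Dv · Dv) dx + (1/(2β+2)) ∫_Ω (|Dv|² + ε)^{β+1} Δψ dx − (β/(β+1)) ∫_Ω (|Dv|² + ε)^{(β−1)/2} [D((|Dv|² + ε)^{(β+1)/2}) · Dv] (Dv · Dψ) dx. -/

import Mathlib

open Real MeasureTheory
open scoped RealInnerProductSpace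

noncomputable section

/-- The Euclidean plane ℝ². -/
abbrev E2 : Type := EuclideanSpace ℝ (Fin 2)

/-- Standard basis vector. -/
def ee (i : Fin 2) : E2 := EuclideanSpace.single i (1 : ℝ)

/-- Partial derivative ∂ᵢf. -/
def pd (i : Fin 2) (f : E2 → ℝ) (x : E2) : ℝ := fderiv ℝ f x (ee i)

/-- Second partial derivative ∂ᵢ∂ⱼf. -/
def pd2 (i j : Fin 2) (f : E2 → ℝ) (x : E2) : ℝ := pd i (pd j f) x

/-- |Df|², squared Euclidean norm of the gradient. -/
def gradSq (f : E2 → ℝ) (x : E2) : ℝ := (pd 0 f x) ^ 2 + (pd 1 f x) ^ 2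

/-- |Df|, Euclidean norm of the gradient. -/
def gradNorm (f : E2 → ℝ) (x : E2) : ℝ := Real.sqrt (gradSq f x)

/-- Laplacian Δf = tr D²f. -/
def lap (f : E2 → ℝ) (x : E2) : ℝ := pd2 0 0 f x + pd2 1 1 f x

/-- ∞-Laplacian Δ∞f = D²f Df · Df. -/
def infLap (f : E2 → ℝ) (x : E2) : ℝ :=
  pd2 0 0 f x * pd 0 f x * pd 0 f x + pd2 0 1 f x * pd 0 f x * pd 1 f x +
  pd2 1 0 f x * pd 1 f x * pd 0 f x + pd2 1 1 f x * pd 1 f x * pd 1 f x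

/-- |D²f|², squared Frobenius norm of the Hessian. -/
def hessFrobSq (f : E2 → ℝ) (x : E2) : ℝ :=
  (pd2 0 0 f x) ^ 2 + (pd2 0 1 f x) ^ 2 + (pd2 1 0 f x) ^ 2 + (pd2 1 1 f x) ^ 2

/-- det D²f, determinant of the Hessian. -/
def detHess (f : E2 → ℝ) (x : E2) : ℝ :=
  pd2 0 0 f x * pd2 1 1 f x - pd2 0 1 f x * pd2 1 0 f x

/-- |D²f Df|². -/
def hessGradSq (f : E2 → ℝ) (x : E2) : ℝ :=
  (pd2 0 0 f x * pd 0 f x + pd2 0 1 f x * pd 1 f x) ^ 2 +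
  (pd2 1 0 f x * pd 0 f x + pd2 1 1 f x * pd 1 f x) ^ 2

/-- Jacobian determinant of the planar map with components `F 0`, `F 1`. -/
def jdet (F : Fin 2 → E2 → ℝ) (x : E2) : ℝ :=
  pd 0 (F 0) x * pd 1 (F 1) x - pd 1 (F 0) x * pd 0 (F 1) x

/-- Squared Frobenius norm of the Jacobian of the planar map with components `F 0`, `F 1`. -/
def jFrobSq (F : Fin 2 → E2 → ℝ) (x : E2) : ℝ :=
  (pd 0 (F 0) x) ^ 2 + (pd 1 (F 0) x) ^ 2 + (pd 0 (F 1) x) ^ 2 + (pd 1 (F 1) x) ^ 2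

/-- Df · Dg. -/
def gradDot (f g : E2 → ℝ) (x : E2) : ℝ :=
  pd 0 f x * pd 0 g x + pd 1 f x * pd 1 g x

/-- D²ψ Dv · Dv. -/
def hessQuad (ψ v : E2 → ℝ) (x : E2) : ℝ :=
  pd2 0 0 ψ x * pd 0 v x * pd 0 v x + pd2 0 1 ψ x * pd 0 v x * pd 1 v x +
  pd2 1 0 ψ x * pd 1 v x * pd 0 v x + pd2 1 1 ψ x * pd 1 v x * pd 1 v x

/-- (D²v Dv) · Dψ. -/
def hessGradDot (v ψ : E2 → ℝ) (x : E2) : ℝ :=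
  (pd2 0 0 v x * pd 0 v x + pd2 0 1 v x * pd 1 v x) * pd 0 ψ x +
  (pd2 1 0 v x * pd 0 v x + pd2 1 1 v x * pd 1 v x) * pd 1 ψ x

/-- Smooth compactly supported test function on Ω. -/
def IsTestOn (ψ : E2 → ℝ) (Ω : Set E2) : Prop :=
  ContDiff ℝ (⊤ : ℕ∞) ψ ∧ HasCompactSupport ψ ∧ tsupport ψ ⊆ Ω

/-- Components of W = |Dv|⁻¹ Dv. -/
def Wcomp (v : E2 → ℝ) (i : Fin 2) : E2 → ℝ := fun y => (gradNorm v y)⁻¹ * pd i v y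

section Basic
variable {f g : E2 → ℝ} {x : E2} {i : Fin 2} {c : ℝ}

lemma pd_congr_nhds (h : f =ᶠ[nhds x] g) : pd i f x = pd i g x := by
  simp [pd, h.fderiv_eq]

lemma pd_add (hf : DifferentiableAt ℝ f x) (hg : DifferentiableAt ℝ g x) :
    pd i (fun y => f y + g y) x = pd i f x + pd i g x := by
  simp [pd, fderiv_fun_add hf hg]

lemma pd_sub (hf : DifferentiableAt ℝ f x) (hg : DifferentiableAt ℝ g x) :
    pd i (fun y => f y - g y) x = pd i f x - pd i g x := by
  simp [pd, fderiv_fun_sub hf hg]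

lemma pd_mul (hf : DifferentiableAt ℝ f x) (hg : DifferentiableAt ℝ g x) :
    pd i (fun y => f y * g y) x = pd i f x * g x + f x * pd i g x := by
  simp [pd, fderiv_fun_mul hf hg]; ring

lemma pd_const_mul (hf : DifferentiableAt ℝ f x) (c : ℝ) :
    pd i (fun y => c * f y) x = c * pd i f x := by
  simp [pd, fderiv_const_mul hf]

lemma pd_rpow (hf : DifferentiableAt ℝ f x) (hpos : f x ≠ 0) (p : ℝ) :
    pd i (fun y => f y ^ p) x = p * f x ^ (p - 1) * pd i f x := by
  have h := (hf.hasFDerivAt.rpow_const (p := p) (Or.inl hpos)).fderiv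
  simp [pd, h]

lemma pd_add_const (hf : DifferentiableAt ℝ f x) (c : ℝ) :
    pd i (fun y => f y + c) x = pd i f x := by
  simp [pd, fderiv_add_const]

lemma pd_sq (hf : DifferentiableAt ℝ f x) :
    pd i (fun y => f y ^ (2:ℕ)) x = 2 * f x * pd i f x := by
  have : (fun y => f y ^ (2:ℕ)) = fun y => f y * f y := by ext y; ring
  rw [this, pd_mul hf hf]; ring
end Basic

section Kit
variable {Ω : Set E2} {f g : E2 → ℝ} {x : E2} {i j : Fin 2}

/-- smooth on Ω -/
def Sm (Ω : Set E2) (f : E2 → ℝ) : Prop := ContDiffOn ℝ (⊤ : ℕ∞) f Ω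

lemma Sm.diffAt (hΩ : IsOpen Ω) (hf : Sm Ω f) (hx : x ∈ Ω) : DifferentiableAt ℝ f x :=
  (hf.contDiffAt (hΩ.mem_nhds hx)).differentiableAt (by simp)

lemma Sm.contAt (hΩ : IsOpen Ω) (hf : Sm Ω f) (hx : x ∈ Ω) : ContinuousAt f x :=
  (Sm.diffAt hΩ hf hx).continuousAt

lemma Sm.pd (hΩ : IsOpen Ω) (hf : Sm Ω f) : Sm Ω (pd i f) := by
  have h1 : ContDiffOn ℝ (⊤ : ℕ∞) (fderiv ℝ f) Ω := by
    apply hf.fderiv_of_isOpen hΩ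
    exact le_of_eq (by simp)
  exact h1.clm_apply contDiffOn_const

lemma Sm.mul (hf : Sm Ω f) (hg : Sm Ω g) : Sm Ω (fun y => f y * g y) :=
  ContDiffOn.mul hf hg

lemma Sm.add (hf : Sm Ω f) (hg : Sm Ω g) : Sm Ω (fun y => f y + g y) :=
  ContDiffOn.add hf hg

lemma Sm.sub (hf : Sm Ω f) (hg : Sm Ω g) : Sm Ω (fun y => f y - g y) :=
  ContDiffOn.sub hf hg

lemma Sm.neg (hf : Sm Ω f) : Sm Ω (fun y => -f y) :=
  ContDiffOn.neg hf

lemma Sm.const_mul (hf : Sm Ω f) (c : ℝ) : Sm Ω (fun y => c * f y) :=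
  ContDiffOn.mul contDiffOn_const hf

lemma Sm.rpow (hf : Sm Ω f) (hpos : ∀ y, f y ≠ 0) (p : ℝ) : Sm Ω (fun y => f y ^ p) :=
  ContDiffOn.rpow_const_of_ne hf (fun y _ => hpos y)

/-- Schwarz symmetry of second partials for functions smooth on an open set. -/
lemma pd_comm (hΩ : IsOpen Ω) (hf : Sm Ω f) (hx : x ∈ Ω) :
    pd i (pd j f) x = pd j (pd i f) x := by
  have hc : ContDiffAt ℝ 2 f x := by
    have := hf.contDiffAt (hΩ.mem_nhds hx)
    exact this.of_le (by
      rw [show ((2:WithTop ℕ∞)) = (((2:ℕ∞)):WithTop ℕ∞) by rfl]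
      exact WithTop.coe_le_coe.2 le_top)
  have hsym := hc.isSymmSndFDerivAt (by simp)
  have hdf : DifferentiableAt ℝ (fderiv ℝ f) x := by
    have h2 : ContDiffAt ℝ 1 (fderiv ℝ f) x := hc.fderiv_right (by norm_num)
    exact h2.differentiableAt one_ne_zero
  have key : ∀ k l : Fin 2, pd k (pd l f) x = fderiv ℝ (fderiv ℝ f) x (ee k) (ee l) := by
    intro k l
    have : pd l f = fun y => (fderiv ℝ f y) (ee l) := rfl
    rw [pd, this, fderiv_clm_apply hdf (differentiableAt_const _)]
    simp
  rw [key i j, key j i, hsym (ee i) (ee j)]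
end Kit

section IBP
variable {Ω K : Set E2} {G f : E2 → ℝ} {x : E2} {i : Fin 2}

lemma ev_zero (hKc : IsClosed K) (hsupp : Function.support G ⊆ K) (hx : x ∉ K) :
    G =ᶠ[nhds x] (fun _ => (0:ℝ)) := by
  filter_upwards [hKc.isOpen_compl.mem_nhds hx] with y hy
  by_contra h
  exact hy (hsupp (Function.mem_support.2 h))

lemma pd_zero_outside (hKc : IsClosed K) (hsupp : Function.support G ⊆ K) (hx : x ∉ K) :
    pd i G x = 0 := by
  rw [pd_congr_nhds (ev_zero hKc hsupp hx)]
  simp [pd]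

lemma pd_support_subset (hKc : IsClosed K) (hsupp : Function.support G ⊆ K) :
    Function.support (pd i G) ⊆ K := by
  intro x hx
  by_contra h
  exact hx (pd_zero_outside hKc hsupp h)

lemma glue_cont (hΩ : IsOpen Ω) (hG : ContinuousOn G Ω) (hKc : IsClosed K) (hKΩ : K ⊆ Ω)
    (hsupp : Function.support G ⊆ K) : Continuous G := by
  rw [continuous_iff_continuousAt]
  intro x
  by_cases hx : x ∈ Ω
  · exact hG.continuousAt (hΩ.mem_nhds hx)
  · exact (ev_zero hKc hsupp (fun hK => hx (hKΩ hK))).continuousAt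

lemma glue_diff (hΩ : IsOpen Ω) (hG : Sm Ω G) (hKc : IsClosed K) (hKΩ : K ⊆ Ω)
    (hsupp : Function.support G ⊆ K) : Differentiable ℝ G := by
  intro x
  by_cases hx : x ∈ Ω
  · exact hG.diffAt hΩ hx
  · exact (differentiableAt_const (0:ℝ)).congr_of_eventuallyEq
      (ev_zero hKc hsupp (fun hK => hx (hKΩ hK)))

lemma glue_integrable (hΩ : IsOpen Ω) (hG : ContinuousOn G Ω) (hK : IsCompact K)
    (hKΩ : K ⊆ Ω) (hsupp : Function.support G ⊆ K) : Integrable G := by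
  have hc := glue_cont hΩ hG hK.isClosed hKΩ hsupp
  exact hc.integrable_of_hasCompactSupport
    (HasCompactSupport.of_support_subset_isCompact hK hsupp)

lemma int_pd_zero (hΩ : IsOpen Ω) (hG : Sm Ω G) (hK : IsCompact K)
    (hKΩ : K ⊆ Ω) (hsupp : Function.support G ⊆ K) (i : Fin 2) :
    ∫ x, pd i G x = 0 := by
  have hdiff := glue_diff hΩ hG hK.isClosed hKΩ hsupp
  have hint : Integrable G := glue_integrable hΩ hG.continuousOn hK hKΩ hsupp
  have hintpd : Integrable (pd i G) :=
    glue_integrable hΩ (hG.pd hΩ).continuousOn hK hKΩ (pd_support_subset hK.isClosed hsupp)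
  have h := integral_mul_fderiv_eq_neg_fderiv_mul_of_integrable
    (f := G) (g := fun _ => (1:ℝ)) (v := ee i) (μ := volume)
    ?_ ?_ ?_ (fun x _ => hdiff x) (fun x _ => differentiable_const _ x)
  · have h0 : (∫ x, G x * fderiv ℝ (fun _ => (1:ℝ)) x (ee i)) = 0 := by
      simp
    rw [h0] at h
    have : (∫ x, fderiv ℝ G x (ee i) * 1) = ∫ x, pd i G x := by
      simp [pd]
    rw [this] at h
    linarith
  · simpa [pd] using hintpd.mul_const 1
  · simp
  · simpa using hint.mul_const 1

lemma setint_eq (hΩ : IsOpen Ω) (hKΩ : K ⊆ Ω) (hsupp : Function.support f ⊆ K) :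
    ∫ x in Ω, f x = ∫ x, f x := by
  apply setIntegral_eq_integral_of_forall_compl_eq_zero
  intro x hx
  by_contra h
  exact hx (hKΩ (hsupp (Function.mem_support.2 h)))
end IBP


section Fields
variable (v ψ : E2 → ℝ) (β ε : ℝ)

def Av : E2 → ℝ := fun y => gradSq v y + ε
def Fv (i : Fin 2) : E2 → ℝ := fun y => Av v ε y ^ (β/2) * pd i v y
def Gdv : E2 → ℝ := fun y => pd 0 v y * pd 0 ψ y + pd 1 v y * pd 1 ψ y
def GG0 : E2 → ℝ := fun y =>
  (1/2) * ((Fv v β ε 1 y * pd 1 (Fv v β ε 0) y - Fv v β ε 0 y * pd 1 (Fv v β ε 1) y) * ψ y)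
  + ((1/2) * (Av v ε y ^ β * (pd 0 v y * Gdv v ψ y))
  - (1/(2*β+2)) * (Av v ε y ^ (β+1) * pd 0 ψ y))
def GG1 : E2 → ℝ := fun y =>
  (1/2) * ((Fv v β ε 0 y * pd 0 (Fv v β ε 1) y - Fv v β ε 1 y * pd 0 (Fv v β ε 0) y) * ψ y)
  + ((1/2) * (Av v ε y ^ β * (pd 1 v y * Gdv v ψ y))
  - (1/(2*β+2)) * (Av v ε y ^ (β+1) * pd 1 ψ y))
end Fields

section FieldFacts
variable {Ω : Set E2} {v ψ : E2 → ℝ} {β ε : ℝ} {x : E2} {i : Fin 2}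

lemma Av_eq : Av v ε = fun y => pd 0 v y * pd 0 v y + pd 1 v y * pd 1 v y + ε := by
  funext y; simp [Av, gradSq]; ring

lemma Av_pos (hε : 0 < ε) : 0 < Av v ε x := by
  have h0 : (0:ℝ) ≤ (pd 0 v x)^2 + (pd 1 v x)^2 := by positivity
  simp only [Av, gradSq]; linarith

lemma sm_Av (hΩ : IsOpen Ω) (hv : Sm Ω v) : Sm Ω (Av v ε) := by
  rw [Av_eq]
  exact (((hv.pd hΩ).mul (hv.pd hΩ)).add ((hv.pd hΩ).mul (hv.pd hΩ))).add contDiffOn_const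

lemma sm_Apow (hΩ : IsOpen Ω) (hv : Sm Ω v) (hε : 0 < ε) (p : ℝ) :
    Sm Ω (fun y => Av v ε y ^ p) :=
  (sm_Av hΩ hv).rpow (fun y => ne_of_gt (Av_pos hε)) p

lemma sm_Fv (hΩ : IsOpen Ω) (hv : Sm Ω v) (hε : 0 < ε) : Sm Ω (Fv v β ε i) :=
  (sm_Apow hΩ hv hε (β/2)).mul (hv.pd hΩ)

lemma sm_Gdv (hΩ : IsOpen Ω) (hv : Sm Ω v) (hψ : Sm Ω ψ) : Sm Ω (Gdv v ψ) :=
  ((hv.pd hΩ).mul (hψ.pd hΩ)).add ((hv.pd hΩ).mul (hψ.pd hΩ))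

lemma sm_GG0 (hΩ : IsOpen Ω) (hv : Sm Ω v) (hψ : Sm Ω ψ) (hε : 0 < ε) :
    Sm Ω (GG0 v ψ β ε) := by
  apply Sm.add
  · exact Sm.const_mul ((((sm_Fv hΩ hv hε).mul ((sm_Fv hΩ hv hε).pd hΩ)).sub
      ((sm_Fv hΩ hv hε).mul ((sm_Fv hΩ hv hε).pd hΩ))).mul hψ) _
  · exact Sm.sub
      (Sm.const_mul ((sm_Apow hΩ hv hε β).mul ((hv.pd hΩ).mul (sm_Gdv hΩ hv hψ))) _)
      (Sm.const_mul ((sm_Apow hΩ hv hε (β+1)).mul (hψ.pd hΩ)) _)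

lemma sm_GG1 (hΩ : IsOpen Ω) (hv : Sm Ω v) (hψ : Sm Ω ψ) (hε : 0 < ε) :
    Sm Ω (GG1 v ψ β ε) := by
  apply Sm.add
  · exact Sm.const_mul ((((sm_Fv hΩ hv hε).mul ((sm_Fv hΩ hv hε).pd hΩ)).sub
      ((sm_Fv hΩ hv hε).mul ((sm_Fv hΩ hv hε).pd hΩ))).mul hψ) _
  · exact Sm.sub
      (Sm.const_mul ((sm_Apow hΩ hv hε β).mul ((hv.pd hΩ).mul (sm_Gdv hΩ hv hψ))) _)
      (Sm.const_mul ((sm_Apow hΩ hv hε (β+1)).mul (hψ.pd hΩ)) _)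

lemma supp_GG0 : Function.support (GG0 v ψ β ε) ⊆ tsupport ψ := by
  intro x hx
  by_contra h
  apply hx
  have hψ0 : ψ x = 0 := image_eq_zero_of_notMem_tsupport h
  have hp : ∀ j : Fin 2, pd j ψ x = 0 :=
    fun j => pd_zero_outside (isClosed_tsupport ψ) (subset_tsupport ψ) h
  simp [GG0, Gdv, hψ0, hp]

lemma supp_GG1 : Function.support (GG1 v ψ β ε) ⊆ tsupport ψ := by
  intro x hx
  by_contra h
  apply hx
  have hψ0 : ψ x = 0 := image_eq_zero_of_notMem_tsupport h
  have hp : ∀ j : Fin 2, pd j ψ x = 0 :=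
    fun j => pd_zero_outside (isClosed_tsupport ψ) (subset_tsupport ψ) h
  simp [GG1, Gdv, hψ0, hp]
end FieldFacts

set_option maxHeartbeats 4000000 in
lemma div_identity {Ω : Set E2} {v ψ : E2 → ℝ} {β ε : ℝ} (hΩ : IsOpen Ω) (hv : Sm Ω v)
    (hψ : Sm Ω ψ) (hε : 0 < ε) (hβ1 : β + 1 ≠ 0) {x : E2} (hx : x ∈ Ω) :
    pd 0 (GG0 v ψ β ε) x + pd 1 (GG1 v ψ β ε) x
      = (-(pd 0 (Fv v β ε 0) x * pd 1 (Fv v β ε 1) x - pd 1 (Fv v β ε 0) x * pd 0 (Fv v β ε 1) x)) * ψ x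
        + (1/2) * (Av v ε x ^ β *
            (pd 0 (pd 0 ψ) x * pd 0 v x * pd 0 v x + pd 0 (pd 1 ψ) x * pd 0 v x * pd 1 v x +
             pd 1 (pd 0 ψ) x * pd 1 v x * pd 0 v x + pd 1 (pd 1 ψ) x * pd 1 v x * pd 1 v x))
        - (1/(2*β+2)) * (Av v ε x ^ (β+1) * (pd 0 (pd 0 ψ) x + pd 1 (pd 1 ψ) x))
        + (β/(β+1)) * (((β+1)/2) * (Av v ε x ^ (β/2-1) * Av v ε x ^ (β/2-1) * Av v ε x) *
            (pd 0 (Av v ε) x * pd 0 v x + pd 1 (Av v ε) x * pd 1 v x) * Gdv v ψ x) := by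
  -- smoothness facts
  have hSA : Sm Ω (Av v ε) := sm_Av hΩ hv
  have hSAp : ∀ p : ℝ, Sm Ω (fun y => Av v ε y ^ p) := fun p => sm_Apow hΩ hv hε p
  have hSF : ∀ i : Fin 2, Sm Ω (Fv v β ε i) := fun i => sm_Fv hΩ hv hε
  have hSGd : Sm Ω (Gdv v ψ) := sm_Gdv hΩ hv hψ
  have hSpv : ∀ i : Fin 2, Sm Ω (pd i v) := fun i => hv.pd hΩ
  have hSpψ : ∀ i : Fin 2, Sm Ω (pd i ψ) := fun i => hψ.pd hΩ
  have hSpF : ∀ i j : Fin 2, Sm Ω (pd j (Fv v β ε i)) := fun i j => (hSF i).pd hΩ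
  -- differentiability at x
  have dd : ∀ {f : E2 → ℝ}, Sm Ω f → DifferentiableAt ℝ f x := fun hf => hf.diffAt hΩ hx
  have dψ := dd hψ
  have dv0 := dd (hSpv 0); have dv1 := dd (hSpv 1)
  have dψ0 := dd (hSpψ 0); have dψ1 := dd (hSpψ 1)
  have dA := dd hSA
  have dAp : ∀ p : ℝ, DifferentiableAt ℝ (fun y => Av v ε y ^ p) x := fun p => dd (hSAp p)
  have dF : ∀ i : Fin 2, DifferentiableAt ℝ (Fv v β ε i) x := fun i => dd (hSF i)
  have dpF : ∀ i j : Fin 2, DifferentiableAt ℝ (pd j (Fv v β ε i)) x := fun i j => dd (hSpF i j)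
  have dGd := dd hSGd
  have hApos : (0:ℝ) < Av v ε x := Av_pos hε
  -- atom expansion lemmas
  have eA : ∀ j : Fin 2, pd j (Av v ε) x
      = 2 * pd 0 v x * pd j (pd 0 v) x + 2 * pd 1 v x * pd j (pd 1 v) x := by
    intro j
    rw [Av_eq]
    rw [pd_add_const ((dv0.fun_mul dv0).fun_add (dv1.fun_mul dv1)) ε]
    rw [pd_add (dv0.fun_mul dv0) (dv1.fun_mul dv1), pd_mul dv0 dv0, pd_mul dv1 dv1]
    ring
  have eAp : ∀ (p : ℝ) (j : Fin 2), pd j (fun y => Av v ε y ^ p) x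
      = p * Av v ε x ^ (p-1) * pd j (Av v ε) x :=
    fun p j => pd_rpow dA (ne_of_gt hApos) p
  have eGd : ∀ j : Fin 2, pd j (Gdv v ψ) x
      = (pd j (pd 0 v) x * pd 0 ψ x + pd 0 v x * pd j (pd 0 ψ) x)
        + (pd j (pd 1 v) x * pd 1 ψ x + pd 1 v x * pd j (pd 1 ψ) x) := by
    intro j
    show pd j (fun y => pd 0 v y * pd 0 ψ y + pd 1 v y * pd 1 ψ y) x = _
    rw [pd_add (dv0.fun_mul dψ0) (dv1.fun_mul dψ1), pd_mul dv0 dψ0, pd_mul dv1 dψ1]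
  have eF : ∀ i j : Fin 2, pd j (Fv v β ε i) x
      = (β/2) * Av v ε x ^ (β/2-1) * pd j (Av v ε) x * pd i v x
        + Av v ε x ^ (β/2) * pd j (pd i v) x := by
    intro i j
    show pd j (fun y => Av v ε y ^ (β/2) * pd i v y) x = _
    rw [pd_mul (dAp (β/2)) (dd (hSpv i)), eAp (β/2) j]
  have eGdval : Gdv v ψ x = pd 0 v x * pd 0 ψ x + pd 1 v x * pd 1 ψ x := rfl
  have eFval : ∀ i : Fin 2, Fv v β ε i x = Av v ε x ^ (β/2) * pd i v x := fun i => rfl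
  -- Schwarz
  have sv : pd 1 (pd 0 v) x = pd 0 (pd 1 v) x := pd_comm hΩ hv hx
  have sψ : pd 1 (pd 0 ψ) x = pd 0 (pd 1 ψ) x := pd_comm hΩ hψ hx
  have sF : ∀ i : Fin 2, pd 0 (pd 1 (Fv v β ε i)) x = pd 1 (pd 0 (Fv v β ε i)) x :=
    fun i => pd_comm hΩ (hSF i) hx
  -- power relations
  have hmul : ∀ s t : ℝ, Av v ε x ^ s * Av v ε x ^ t = Av v ε x ^ (s+t) :=
    fun s t => (Real.rpow_add hApos s t).symm
  have hA1 : Av v ε x ^ (1:ℝ) = Av v ε x := Real.rpow_one _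
  have epow : ∀ s t : ℝ, s = t → Av v ε x ^ s = Av v ε x ^ t := fun s t h => by rw [h]
  have emulA : ∀ s : ℝ, Av v ε x ^ s * Av v ε x = Av v ε x ^ (s+1) := fun s => by
    have h := hmul s 1; rw [hA1] at h; exact h
  have h2 : Av v ε x * Av v ε x = Av v ε x ^ (2:ℝ) := by
    have h := hmul 1 1; rw [hA1] at h
    rw [h]; exact epow _ _ (by norm_num)
  have e1 : Av v ε x ^ (β/2) = Av v ε x ^ (β/2-1) * Av v ε x := by
    rw [emulA]; exact epow _ _ (by ring)
  have e2 : Av v ε x ^ β = Av v ε x ^ (β/2-1) * Av v ε x ^ (β/2-1) * (Av v ε x * Av v ε x) := by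
    rw [hmul, h2, hmul]; exact epow _ _ (by ring)
  have e3 : Av v ε x ^ (β-1) = Av v ε x ^ (β/2-1) * Av v ε x ^ (β/2-1) * Av v ε x := by
    rw [hmul, emulA]; exact epow _ _ (by ring)
  have e4 : Av v ε x ^ (β+1) = Av v ε x ^ (β/2-1) * Av v ε x ^ (β/2-1)
      * (Av v ε x * Av v ε x * Av v ε x) := by
    rw [hmul, h2, emulA, hmul]; exact epow _ _ (by ring)
  -- differentiability of compound pieces
  have dB0in : DifferentiableAt ℝ
      (fun y => Fv v β ε 1 y * pd 1 (Fv v β ε 0) y - Fv v β ε 0 y * pd 1 (Fv v β ε 1) y) x :=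
    ((dF 1).mul (dpF 0 1)).sub ((dF 0).mul (dpF 1 1))
  have dB1in : DifferentiableAt ℝ
      (fun y => Fv v β ε 0 y * pd 0 (Fv v β ε 1) y - Fv v β ε 1 y * pd 0 (Fv v β ε 0) y) x :=
    ((dF 0).mul (dpF 1 0)).sub ((dF 1).mul (dpF 0 0))
  have dB0 := dB0in.fun_mul dψ
  have dB1 := dB1in.fun_mul dψ
  have dC0 := (dAp β).fun_mul (dv0.fun_mul dGd)
  have dC1 := (dAp β).fun_mul (dv1.fun_mul dGd)
  have dD0 := (dAp (β+1)).fun_mul dψ0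
  have dD1 := (dAp (β+1)).fun_mul dψ1
  -- expand the divergence
  unfold GG0 GG1
  rw [pd_add (dB0.const_mul _) ((dC0.const_mul _).fun_sub (dD0.const_mul _)),
      pd_add (dB1.const_mul _) ((dC1.const_mul _).fun_sub (dD1.const_mul _)),
      pd_const_mul dB0 (1/2), pd_const_mul dB1 (1/2),
      pd_sub (dC0.const_mul _) (dD0.const_mul _),
      pd_sub (dC1.const_mul _) (dD1.const_mul _),
      pd_const_mul dC0 (1/2), pd_const_mul dC1 (1/2),
      pd_const_mul dD0 (1/(2*β+2)), pd_const_mul dD1 (1/(2*β+2)),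
      pd_mul dB0in dψ, pd_mul dB1in dψ,
      pd_sub ((dF 1).fun_mul (dpF 0 1)) ((dF 0).fun_mul (dpF 1 1)),
      pd_sub ((dF 0).fun_mul (dpF 1 0)) ((dF 1).fun_mul (dpF 0 0)),
      pd_mul (dF 1) (dpF 0 1), pd_mul (dF 0) (dpF 1 1),
      pd_mul (dF 0) (dpF 1 0), pd_mul (dF 1) (dpF 0 0),
      pd_mul (dAp β) (dv0.fun_mul dGd), pd_mul (dAp β) (dv1.fun_mul dGd),
      pd_mul dv0 dGd, pd_mul dv1 dGd,
      pd_mul (dAp (β+1)) dψ0, pd_mul (dAp (β+1)) dψ1,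
      eAp β 0, eAp β 1, eAp (β+1) 0, eAp (β+1) 1,
      eGd 0, eGd 1, eF 0 0, eF 0 1, eF 1 0, eF 1 1, eFval 0, eFval 1, eGdval,
      sF 0, sF 1, eA 0, eA 1, sv, sψ,
      epow (β+1-1) β (by ring), e1, e2, e3, e4]
  have h2β : (2*β+2 : ℝ) ≠ 0 := by intro h; apply hβ1; linarith
  field_simp
  ring

/-- the distributional identity for −det D[(|Dv|²+ε)^{β/2}Dv]. -/
theorem stmt_5 (Ω : Set E2) (hΩ : IsOpen Ω) (v : E2 → ℝ)
    (hv : ContDiffOn ℝ (⊤ : ℕ∞) v Ω) (β : ℝ) (hβ : -1 < β) (ε : ℝ) (hε : 0 < ε)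
    (ψ : E2 → ℝ) (hψ : IsTestOn ψ Ω) :
    (∫ x in Ω, (-jdet (fun i y => (gradSq v y + ε) ^ (β/2) * pd i v y) x) * ψ x)
      = -(1/2) * (∫ x in Ω, (gradSq v x + ε) ^ β * hessQuad ψ v x)
        + (1/(2*β+2)) * (∫ x in Ω, (gradSq v x + ε) ^ (β+1) * lap ψ x)
        - (β/(β+1)) * ∫ x in Ω, (gradSq v x + ε) ^ ((β-1)/2)
            * gradDot (fun y => (gradSq v y + ε) ^ ((β+1)/2)) v x * gradDot v ψ x := by
  obtain ⟨hψc, hψcs, hψΩ⟩ := hψ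
  have hsmv : Sm Ω v := hv
  have hsmψ : Sm Ω ψ := hψc.contDiffOn
  have hβ1 : β + 1 ≠ 0 := by linarith
  have hK : IsCompact (tsupport ψ) := hψcs
  have hKc : IsClosed (tsupport ψ) := isClosed_tsupport ψ
  have hψsupp : Function.support ψ ⊆ tsupport ψ := subset_tsupport ψ
  have hpψsupp : ∀ j : Fin 2, Function.support (pd j ψ) ⊆ tsupport ψ :=
    fun j => pd_support_subset hKc hψsupp
  have hpψ0 : ∀ j : Fin 2, ∀ x, x ∉ tsupport ψ → pd j ψ x = 0 :=
    fun j x hx => pd_zero_outside hKc hψsupp hx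
  have hppψ0 : ∀ i j : Fin 2, ∀ x, x ∉ tsupport ψ → pd i (pd j ψ) x = 0 :=
    fun i j x hx => pd_zero_outside hKc (hpψsupp j) hx
  -- rfl conversions of the four integrals to Av/Fv atom form
  have hL : (∫ x in Ω, (-jdet (fun i y => (gradSq v y + ε) ^ (β/2) * pd i v y) x) * ψ x)
      = ∫ x in Ω, (-(pd 0 (Fv v β ε 0) x * pd 1 (Fv v β ε 1) x
          - pd 1 (Fv v β ε 0) x * pd 0 (Fv v β ε 1) x)) * ψ x := rfl
  have hR1 : (∫ x in Ω, (gradSq v x + ε) ^ β * hessQuad ψ v x)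
      = ∫ x in Ω, Av v ε x ^ β *
          (pd 0 (pd 0 ψ) x * pd 0 v x * pd 0 v x + pd 0 (pd 1 ψ) x * pd 0 v x * pd 1 v x +
           pd 1 (pd 0 ψ) x * pd 1 v x * pd 0 v x + pd 1 (pd 1 ψ) x * pd 1 v x * pd 1 v x) := rfl
  have hR2 : (∫ x in Ω, (gradSq v x + ε) ^ (β+1) * lap ψ x)
      = ∫ x in Ω, Av v ε x ^ (β+1) * (pd 0 (pd 0 ψ) x + pd 1 (pd 1 ψ) x) := rfl
  have hR3 : (∫ x in Ω, (gradSq v x + ε) ^ ((β-1)/2)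
        * gradDot (fun y => (gradSq v y + ε) ^ ((β+1)/2)) v x * gradDot v ψ x)
      = ∫ x in Ω, Av v ε x ^ ((β-1)/2)
          * (pd 0 (fun y => Av v ε y ^ ((β+1)/2)) x * pd 0 v x
             + pd 1 (fun y => Av v ε y ^ ((β+1)/2)) x * pd 1 v x) * Gdv v ψ x := rfl
  rw [hL, hR1, hR2, hR3]
  -- bridge the third integrand
  have hR3b : ∀ x ∈ Ω, Av v ε x ^ ((β-1)/2)
          * (pd 0 (fun y => Av v ε y ^ ((β+1)/2)) x * pd 0 v x
             + pd 1 (fun y => Av v ε y ^ ((β+1)/2)) x * pd 1 v x) * Gdv v ψ x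
      = ((β+1)/2) * (Av v ε x ^ (β/2-1) * Av v ε x ^ (β/2-1) * Av v ε x) *
          (pd 0 (Av v ε) x * pd 0 v x + pd 1 (Av v ε) x * pd 1 v x) * Gdv v ψ x := by
    intro x hx
    have dA : DifferentiableAt ℝ (Av v ε) x := (sm_Av hΩ hsmv).diffAt hΩ hx
    have hApos : (0:ℝ) < Av v ε x := Av_pos hε
    have hmul : ∀ s t : ℝ, Av v ε x ^ s * Av v ε x ^ t = Av v ε x ^ (s+t) :=
      fun s t => (Real.rpow_add hApos s t).symm
    have hA1 : Av v ε x ^ (1:ℝ) = Av v ε x := Real.rpow_one _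
    have epow : ∀ s t : ℝ, s = t → Av v ε x ^ s = Av v ε x ^ t := fun s t h => by rw [h]
    have emulA : ∀ s : ℝ, Av v ε x ^ s * Av v ε x = Av v ε x ^ (s+1) := fun s => by
      have h := hmul s 1; rw [hA1] at h; exact h
    have eAp : ∀ j : Fin 2, pd j (fun y => Av v ε y ^ ((β+1)/2)) x
        = ((β+1)/2) * Av v ε x ^ ((β+1)/2-1) * pd j (Av v ε) x :=
      fun j => pd_rpow dA (ne_of_gt hApos) _
    have hTT : Av v ε x ^ ((β-1)/2) * Av v ε x ^ ((β-1)/2)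
        = Av v ε x ^ (β/2-1) * Av v ε x ^ (β/2-1) * Av v ε x := by
      rw [hmul, hmul, emulA]; exact epow _ _ (by ring)
    rw [eAp 0, eAp 1, epow ((β+1)/2-1) ((β-1)/2) (by ring)]
    linear_combination (((β+1)/2) *
      (pd 0 (Av v ε) x * pd 0 v x + pd 1 (Av v ε) x * pd 1 v x) * Gdv v ψ x) * hTT
  rw [setIntegral_congr_fun hΩ.measurableSet hR3b]
  -- integrability of the four integrands
  have iL : IntegrableOn (fun x => (-(pd 0 (Fv v β ε 0) x * pd 1 (Fv v β ε 1) x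
      - pd 1 (Fv v β ε 0) x * pd 0 (Fv v β ε 1) x)) * ψ x) Ω volume := by
    apply (glue_integrable hΩ _ hK hψΩ _).integrableOn
    · exact ((((((sm_Fv hΩ hsmv hε).pd hΩ).mul ((sm_Fv hΩ hsmv hε).pd hΩ)).sub
        (((sm_Fv hΩ hsmv hε).pd hΩ).mul ((sm_Fv hΩ hsmv hε).pd hΩ))).neg).mul hsmψ).continuousOn
    · intro x hx
      by_contra h
      exact (Function.mem_support.1 hx) (by simp [image_eq_zero_of_notMem_tsupport h])
  have i1 : IntegrableOn (fun x => Av v ε x ^ β *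
          (pd 0 (pd 0 ψ) x * pd 0 v x * pd 0 v x + pd 0 (pd 1 ψ) x * pd 0 v x * pd 1 v x +
           pd 1 (pd 0 ψ) x * pd 1 v x * pd 0 v x + pd 1 (pd 1 ψ) x * pd 1 v x * pd 1 v x)) Ω volume := by
    apply (glue_integrable hΩ _ hK hψΩ _).integrableOn
    · have c2 : ∀ i j : Fin 2, Sm Ω (pd i (pd j ψ)) := fun i j => ((hsmψ.pd hΩ).pd hΩ)
      have cv : ∀ i : Fin 2, Sm Ω (pd i v) := fun i => hsmv.pd hΩ
      exact ((sm_Apow hΩ hsmv hε β).mul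
        (((((((c2 0 0).mul (cv 0)).mul (cv 0)).add
          (((c2 0 1).mul (cv 0)).mul (cv 1))).add
         ((((c2 1 0).mul (cv 1)).mul (cv 0)))).add
          (((c2 1 1).mul (cv 1)).mul (cv 1))))).continuousOn
    · intro x hx
      by_contra h
      exact (Function.mem_support.1 hx) (by simp [hppψ0 _ _ x h])
  have i2 : IntegrableOn (fun x => Av v ε x ^ (β+1) * (pd 0 (pd 0 ψ) x + pd 1 (pd 1 ψ) x)) Ω volume := by
    apply (glue_integrable hΩ _ hK hψΩ _).integrableOn
    · exact ((sm_Apow hΩ hsmv hε (β+1)).mul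
        (((hsmψ.pd hΩ).pd hΩ).add ((hsmψ.pd hΩ).pd hΩ))).continuousOn
    · intro x hx
      by_contra h
      exact (Function.mem_support.1 hx) (by simp [hppψ0 _ _ x h])
  have i3 : IntegrableOn (fun x => ((β+1)/2) * (Av v ε x ^ (β/2-1) * Av v ε x ^ (β/2-1) * Av v ε x) *
          (pd 0 (Av v ε) x * pd 0 v x + pd 1 (Av v ε) x * pd 1 v x) * Gdv v ψ x) Ω volume := by
    apply (glue_integrable hΩ _ hK hψΩ _).integrableOn
    · have t1 : Sm Ω (fun x => Av v ε x ^ (β/2-1) * Av v ε x ^ (β/2-1) * Av v ε x) :=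
        ((sm_Apow hΩ hsmv hε (β/2-1)).mul (sm_Apow hΩ hsmv hε (β/2-1))).mul (sm_Av hΩ hsmv)
      have t2 : Sm Ω (fun x => pd 0 (Av v ε) x * pd 0 v x + pd 1 (Av v ε) x * pd 1 v x) :=
        (((sm_Av hΩ hsmv).pd hΩ).mul (hsmv.pd hΩ)).add (((sm_Av hΩ hsmv).pd hΩ).mul (hsmv.pd hΩ))
      exact (((t1.const_mul ((β+1)/2)).mul t2).mul (sm_Gdv hΩ hsmv hsmψ)).continuousOn
    · intro x hx
      by_contra h
      exact (Function.mem_support.1 hx) (by simp [Gdv, hpψ0 0 x h, hpψ0 1 x h])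
  -- the divergence has integral zero
  have hzero : (∫ x in Ω, (pd 0 (GG0 v ψ β ε) x + pd 1 (GG1 v ψ β ε) x)) = 0 := by
    have s0 := pd_support_subset (i := 0) hKc (supp_GG0 (v := v) (β := β) (ε := ε))
    have s1 := pd_support_subset (i := 1) hKc (supp_GG1 (v := v) (β := β) (ε := ε))
    have j0 : IntegrableOn (fun x => pd 0 (GG0 v ψ β ε) x) Ω volume :=
      (glue_integrable hΩ (((sm_GG0 hΩ hsmv hsmψ hε).pd hΩ).continuousOn) hK hψΩ s0).integrableOn
    have j1 : IntegrableOn (fun x => pd 1 (GG1 v ψ β ε) x) Ω volume :=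
      (glue_integrable hΩ (((sm_GG1 hΩ hsmv hsmψ hε).pd hΩ).continuousOn) hK hψΩ s1).integrableOn
    rw [integral_add j0 j1]
    rw [setint_eq hΩ hψΩ s0, setint_eq hΩ hψΩ s1]
    rw [int_pd_zero hΩ (sm_GG0 hΩ hsmv hsmψ hε) hK hψΩ (supp_GG0) 0,
        int_pd_zero hΩ (sm_GG1 hΩ hsmv hsmψ hε) hK hψΩ (supp_GG1) 1]
    norm_num
  -- rewrite the divergence integrand pointwise and split
  rw [setIntegral_congr_fun hΩ.measurableSet
    (fun x hx => div_identity hΩ hsmv hsmψ hε hβ1 hx)] at hzero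
  have iB : IntegrableOn (fun x => (1/2) * (Av v ε x ^ β *
            (pd 0 (pd 0 ψ) x * pd 0 v x * pd 0 v x + pd 0 (pd 1 ψ) x * pd 0 v x * pd 1 v x +
             pd 1 (pd 0 ψ) x * pd 1 v x * pd 0 v x + pd 1 (pd 1 ψ) x * pd 1 v x * pd 1 v x))) Ω volume := i1.const_mul _
  have iC : IntegrableOn (fun x => (1/(2*β+2)) * (Av v ε x ^ (β+1) * (pd 0 (pd 0 ψ) x + pd 1 (pd 1 ψ) x))) Ω volume := i2.const_mul _
  have iD : IntegrableOn (fun x => (β/(β+1)) * (((β+1)/2) * (Av v ε x ^ (β/2-1) * Av v ε x ^ (β/2-1) * Av v ε x) *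
            (pd 0 (Av v ε) x * pd 0 v x + pd 1 (Av v ε) x * pd 1 v x) * Gdv v ψ x)) Ω volume := i3.const_mul _
  have h4 : (∫ x in Ω, ((-(pd 0 (Fv v β ε 0) x * pd 1 (Fv v β ε 1) x - pd 1 (Fv v β ε 0) x * pd 0 (Fv v β ε 1) x)) * ψ x
        + (1/2) * (Av v ε x ^ β *
            (pd 0 (pd 0 ψ) x * pd 0 v x * pd 0 v x + pd 0 (pd 1 ψ) x * pd 0 v x * pd 1 v x +
             pd 1 (pd 0 ψ) x * pd 1 v x * pd 0 v x + pd 1 (pd 1 ψ) x * pd 1 v x * pd 1 v x))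
        - (1/(2*β+2)) * (Av v ε x ^ (β+1) * (pd 0 (pd 0 ψ) x + pd 1 (pd 1 ψ) x))
        + (β/(β+1)) * (((β+1)/2) * (Av v ε x ^ (β/2-1) * Av v ε x ^ (β/2-1) * Av v ε x) *
            (pd 0 (Av v ε) x * pd 0 v x + pd 1 (Av v ε) x * pd 1 v x) * Gdv v ψ x)))
      = (∫ x in Ω, ((-(pd 0 (Fv v β ε 0) x * pd 1 (Fv v β ε 1) x - pd 1 (Fv v β ε 0) x * pd 0 (Fv v β ε 1) x)) * ψ x
        + (1/2) * (Av v ε x ^ β *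
            (pd 0 (pd 0 ψ) x * pd 0 v x * pd 0 v x + pd 0 (pd 1 ψ) x * pd 0 v x * pd 1 v x +
             pd 1 (pd 0 ψ) x * pd 1 v x * pd 0 v x + pd 1 (pd 1 ψ) x * pd 1 v x * pd 1 v x))
        - (1/(2*β+2)) * (Av v ε x ^ (β+1) * (pd 0 (pd 0 ψ) x + pd 1 (pd 1 ψ) x))))
        + ∫ x in Ω, (β/(β+1)) * (((β+1)/2) * (Av v ε x ^ (β/2-1) * Av v ε x ^ (β/2-1) * Av v ε x) *
            (pd 0 (Av v ε) x * pd 0 v x + pd 1 (Av v ε) x * pd 1 v x) * Gdv v ψ x) :=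
    integral_add ((iL.add iB).sub iC) iD
  have h5 : (∫ x in Ω, ((-(pd 0 (Fv v β ε 0) x * pd 1 (Fv v β ε 1) x - pd 1 (Fv v β ε 0) x * pd 0 (Fv v β ε 1) x)) * ψ x
        + (1/2) * (Av v ε x ^ β *
            (pd 0 (pd 0 ψ) x * pd 0 v x * pd 0 v x + pd 0 (pd 1 ψ) x * pd 0 v x * pd 1 v x +
             pd 1 (pd 0 ψ) x * pd 1 v x * pd 0 v x + pd 1 (pd 1 ψ) x * pd 1 v x * pd 1 v x))
        - (1/(2*β+2)) * (Av v ε x ^ (β+1) * (pd 0 (pd 0 ψ) x + pd 1 (pd 1 ψ) x))))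
      = (∫ x in Ω, ((-(pd 0 (Fv v β ε 0) x * pd 1 (Fv v β ε 1) x - pd 1 (Fv v β ε 0) x * pd 0 (Fv v β ε 1) x)) * ψ x
        + (1/2) * (Av v ε x ^ β *
            (pd 0 (pd 0 ψ) x * pd 0 v x * pd 0 v x + pd 0 (pd 1 ψ) x * pd 0 v x * pd 1 v x +
             pd 1 (pd 0 ψ) x * pd 1 v x * pd 0 v x + pd 1 (pd 1 ψ) x * pd 1 v x * pd 1 v x))))
        - ∫ x in Ω, (1/(2*β+2)) * (Av v ε x ^ (β+1) * (pd 0 (pd 0 ψ) x + pd 1 (pd 1 ψ) x)) :=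
    integral_sub (iL.add iB) iC
  have h6 : (∫ x in Ω, ((-(pd 0 (Fv v β ε 0) x * pd 1 (Fv v β ε 1) x - pd 1 (Fv v β ε 0) x * pd 0 (Fv v β ε 1) x)) * ψ x
        + (1/2) * (Av v ε x ^ β *
            (pd 0 (pd 0 ψ) x * pd 0 v x * pd 0 v x + pd 0 (pd 1 ψ) x * pd 0 v x * pd 1 v x +
             pd 1 (pd 0 ψ) x * pd 1 v x * pd 0 v x + pd 1 (pd 1 ψ) x * pd 1 v x * pd 1 v x))))
      = (∫ x in Ω, (-(pd 0 (Fv v β ε 0) x * pd 1 (Fv v β ε 1) x - pd 1 (Fv v β ε 0) x * pd 0 (Fv v β ε 1) x)) * ψ x)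
        + ∫ x in Ω, (1/2) * (Av v ε x ^ β *
            (pd 0 (pd 0 ψ) x * pd 0 v x * pd 0 v x + pd 0 (pd 1 ψ) x * pd 0 v x * pd 1 v x +
             pd 1 (pd 0 ψ) x * pd 1 v x * pd 0 v x + pd 1 (pd 1 ψ) x * pd 1 v x * pd 1 v x)) :=
    integral_add iL iB
  have h7 : (∫ x in Ω, (1/2) * (Av v ε x ^ β *
            (pd 0 (pd 0 ψ) x * pd 0 v x * pd 0 v x + pd 0 (pd 1 ψ) x * pd 0 v x * pd 1 v x +
             pd 1 (pd 0 ψ) x * pd 1 v x * pd 0 v x + pd 1 (pd 1 ψ) x * pd 1 v x * pd 1 v x))) = (1/2) * ∫ x in Ω, (Av v ε x ^ β *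
            (pd 0 (pd 0 ψ) x * pd 0 v x * pd 0 v x + pd 0 (pd 1 ψ) x * pd 0 v x * pd 1 v x +
             pd 1 (pd 0 ψ) x * pd 1 v x * pd 0 v x + pd 1 (pd 1 ψ) x * pd 1 v x * pd 1 v x)) :=
    integral_const_mul _ _
  have h8 : (∫ x in Ω, (1/(2*β+2)) * (Av v ε x ^ (β+1) * (pd 0 (pd 0 ψ) x + pd 1 (pd 1 ψ) x))) = (1/(2*β+2)) * ∫ x in Ω, (Av v ε x ^ (β+1) * (pd 0 (pd 0 ψ) x + pd 1 (pd 1 ψ) x)) :=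
    integral_const_mul _ _
  have h9 : (∫ x in Ω, (β/(β+1)) * (((β+1)/2) * (Av v ε x ^ (β/2-1) * Av v ε x ^ (β/2-1) * Av v ε x) *
            (pd 0 (Av v ε) x * pd 0 v x + pd 1 (Av v ε) x * pd 1 v x) * Gdv v ψ x)) = (β/(β+1)) * ∫ x in Ω, (((β+1)/2) * (Av v ε x ^ (β/2-1) * Av v ε x ^ (β/2-1) * Av v ε x) *
            (pd 0 (Av v ε) x * pd 0 v x + pd 1 (Av v ε) x * pd 1 v x) * Gdv v ψ x) :=
    integral_const_mul _ _
  rw [h4, h5, h6, h7, h8, h9] at hzero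
  linarith
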